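/- Let c be a real constant. The function K_2(u_1^*, v_1^*, B^*) = (u_1^* - c - c·ln B^*)/(B^*-1) - B^* v_1^*/(B^*-1)² - c B^* ln B^*/(B^*-1)² + c·ln(B^*-1) - c·ln B^*, defined for B^* > 1, is a first integral of the characteristic vector field: (u_1^*+v_1^*)·∂K_2/∂u_1^* + (2v_1^* + 2c·ln B^*)·∂K_2/∂v_1^* + (B^*-1)·∂K_2/∂B^* = 0 at every point with B^* > 1. -/

import Mathlib

/-- The function `K₂` from the proof of Theorem 1.2. -/
noncomputable def K2 (c u₁ v₁ B : ℝ) : ℝ :=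
  (u₁ - c - c * Real.log B) / (B - 1) - B * v₁ / (B - 1) ^ 2
    - c * B * Real.log B / (B - 1) ^ 2 + c * Real.log (B - 1) - c * Real.log B

/-- `K₂` is a first integral of the characteristic vector field
`(u₁*+v₁*)∂_{u₁*} + (2v₁* + 2c·ln B*)∂_{v₁*} + (B*-1)∂_{B*}` for `B* > 1`. -/
theorem K2_first_integral (c : ℝ) :
    ∀ u₁ v₁ B : ℝ, 1 < B →
      (u₁ + v₁) * deriv (fun t => K2 c t v₁ B) u₁
        + (2 * v₁ + 2 * c * Real.log B) * deriv (fun t => K2 c u₁ t B) v₁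
        + (B - 1) * deriv (fun t => K2 c u₁ v₁ t) B = 0 := by
  intro u₁ v₁ B hB1
  have h0 : B ≠ 0 := by positivity
  have hd : B - 1 ≠ 0 := sub_ne_zero.mpr (ne_of_gt hB1)
  have Hu : HasDerivAt (fun t => K2 c t v₁ B) (1 / (B - 1)) u₁ :=
    (((((hasDerivAt_id u₁).sub_const c).sub_const (c * Real.log B)).div_const
        (B - 1)).sub_const (B * v₁ / (B - 1) ^ 2) |>.sub_const
        (c * B * Real.log B / (B - 1) ^ 2) |>.add_const
        (c * Real.log (B - 1)) |>.sub_const (c * Real.log B))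
  have Hv : HasDerivAt (fun t => K2 c u₁ t B) (-(B * 1 / (B - 1) ^ 2)) v₁ :=
    ((((hasDerivAt_id v₁).const_mul B).div_const ((B - 1) ^ 2)).const_sub
        ((u₁ - c - c * Real.log B) / (B - 1)) |>.sub_const
        (c * B * Real.log B / (B - 1) ^ 2) |>.add_const
        (c * Real.log (B - 1)) |>.sub_const (c * Real.log B))
  have T1 : HasDerivAt (fun t : ℝ => (u₁ - c - c * Real.log t) / (t - 1))
      ((-(c * B⁻¹) * (B - 1) - (u₁ - c - c * Real.log B) * 1) / (B - 1) ^ 2) B :=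
    (((Real.hasDerivAt_log h0).const_mul c).const_sub (u₁ - c)).div
      ((hasDerivAt_id B).sub_const 1) hd
  have T2 : HasDerivAt (fun t : ℝ => t * v₁ / (t - 1) ^ 2)
      ((1 * v₁ * (B - 1) ^ 2 - B * v₁ * (↑2 * (B - 1) ^ (2 - 1) * 1)) / ((B - 1) ^ 2) ^ 2) B :=
    ((hasDerivAt_id B).mul_const v₁).div (((hasDerivAt_id B).sub_const 1).pow 2)
      (pow_ne_zero 2 hd)
  have T3 : HasDerivAt (fun t : ℝ => c * t * Real.log t / (t - 1) ^ 2)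
      (((c * 1 * Real.log B + c * B * B⁻¹) * (B - 1) ^ 2
          - c * B * Real.log B * (↑2 * (B - 1) ^ (2 - 1) * 1)) / ((B - 1) ^ 2) ^ 2) B :=
    (((hasDerivAt_id B).const_mul c).mul (Real.hasDerivAt_log h0)).div
      (((hasDerivAt_id B).sub_const 1).pow 2) (pow_ne_zero 2 hd)
  have T4 : HasDerivAt (fun t : ℝ => c * Real.log (t - 1)) (c * ((B - 1)⁻¹ * 1)) B :=
    (HasDerivAt.comp (h₂ := Real.log) B (Real.hasDerivAt_log hd) ((hasDerivAt_id B).sub_const 1)).const_mul c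
  have T5 : HasDerivAt (fun t : ℝ => c * Real.log t) (c * B⁻¹) B :=
    (Real.hasDerivAt_log h0).const_mul c
  have HB : HasDerivAt (fun t => K2 c u₁ v₁ t)
      ((-(c * B⁻¹) * (B - 1) - (u₁ - c - c * Real.log B) * 1) / (B - 1) ^ 2
        - (1 * v₁ * (B - 1) ^ 2 - B * v₁ * (↑2 * (B - 1) ^ (2 - 1) * 1)) / ((B - 1) ^ 2) ^ 2
        - ((c * 1 * Real.log B + c * B * B⁻¹) * (B - 1) ^ 2
            - c * B * Real.log B * (↑2 * (B - 1) ^ (2 - 1) * 1)) / ((B - 1) ^ 2) ^ 2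
        + c * ((B - 1)⁻¹ * 1) - c * B⁻¹) B :=
    (((T1.sub T2).sub T3).add T4).sub T5
  rw [Hu.deriv, Hv.deriv, HB.deriv]
  field_simp
  ring
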